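/- Let R : [0,T]² → ℝ be a continuous function of bounded planar variation (so its planar increments are given by a finite signed measure μ). Then R has zero planar quadratic variation: (1/ε)∫₀ᵀ (Δ_{]t,t+ε]²} R)² dt → 0 as ε → 0. -/

import Mathlib

open Set MeasureTheory Filter
open scoped Topology

noncomputable section

/-- Planar increment of `R` over the rectangle `]a₁,b₁] × ]a₂,b₂]`. -/
def planarInc (R : ℝ × ℝ → ℝ) (a₁ b₁ a₂ b₂ : ℝ) : ℝ :=
  R (b₁, b₂) + R (a₁, a₂) - R (a₁, b₂) - R (b₁, a₂)

lemma abs_apply_le_tv (μ : SignedMeasure (ℝ × ℝ)) {s : Set (ℝ × ℝ)} (hs : MeasurableSet s) :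
    |μ s| ≤ (μ.totalVariation s).toReal := by
  set j := μ.toJordanDecomposition with hj
  have h1 : μ s = (j.posPart s).toReal - (j.negPart s).toReal := by
    conv_lhs => rw [← μ.toSignedMeasure_toJordanDecomposition]
    rw [JordanDecomposition.toSignedMeasure, VectorMeasure.sub_apply,
      Measure.toSignedMeasure_apply_measurable hs, Measure.toSignedMeasure_apply_measurable hs]
    rfl
  have h2 : (μ.totalVariation s).toReal = (j.posPart s).toReal + (j.negPart s).toReal := by
    rw [SignedMeasure.totalVariation, Measure.add_apply,
      ENNReal.toReal_add (measure_ne_top _ _) (measure_ne_top _ _)]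
  rw [h1, h2]
  have := ENNReal.toReal_nonneg (a := j.posPart s)
  have := ENNReal.toReal_nonneg (a := j.negPart s)
  rw [abs_sub_le_iff]; constructor <;> linarith

theorem stmt_4 (T : ℝ) (hT : 0 < T) (R : ℝ × ℝ → ℝ) (hcont : Continuous R)
    (μ : SignedMeasure (ℝ × ℝ))
    (hμ : ∀ a₁ b₁ a₂ b₂ : ℝ, a₁ ≤ b₁ → a₂ ≤ b₂ →
      μ (Ioc a₁ b₁ ×ˢ Ioc a₂ b₂) = planarInc R a₁ b₁ a₂ b₂) :
    Tendsto (fun ε : ℝ => (1 / ε) * ∫ t in Ioc (0 : ℝ) T, (planarInc R t (t + ε) t (t + ε)) ^ 2)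
      (𝓝[>] 0) (𝓝 0) := by
  classical
  set ν := μ.totalVariation with hν
  haveI : IsFiniteMeasure ν := by
    rw [hν, SignedMeasure.totalVariation]; infer_instance
  set C := (ν univ).toReal with hC
  have hC0 : 0 ≤ C := ENNReal.toReal_nonneg
  set F : ℝ → ℝ := fun t => (ν (Iic t ×ˢ (univ : Set ℝ))).toReal with hF
  have hFmono : Monotone F := fun a b hab =>
    ENNReal.toReal_mono (measure_ne_top _ _)
      (measure_mono (prod_mono (Iic_subset_Iic.2 hab) subset_rfl))
  have hF0 : ∀ t, 0 ≤ F t := fun t => ENNReal.toReal_nonneg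
  have hFC : ∀ t, F t ≤ C := fun t =>
    ENNReal.toReal_mono (measure_ne_top _ _) (measure_mono (subset_univ _))
  have hFmeas : Measurable F := hFmono.measurable
  have hbdd : ∀ (g : ℝ → ℝ), Measurable g → (∀ t, 0 ≤ g t) → (∀ t, g t ≤ C) →
      ∀ a b : ℝ, IntegrableOn g (Ioc a b) := by
    intro g hg h0 hCb a b
    have hc : IntegrableOn (fun _ : ℝ => C) (Ioc a b) volume :=
      integrableOn_const measure_Ioc_lt_top.ne
    refine hc.mono' hg.aestronglyMeasurable (ae_of_all _ fun t => ?_)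
    rw [Real.norm_eq_abs, abs_of_nonneg (h0 t)]
    exact hCb t
  have hFii : ∀ a b : ℝ, IntervalIntegrable F volume a b := by
    intro a b
    rw [intervalIntegrable_iff, uIoc]
    exact hbdd F hFmeas hF0 hFC _ _
  set K : Set (ℝ × ℝ) := Icc (0:ℝ) (T+1) ×ˢ Icc (0:ℝ) (T+1) with hK
  have hKc : IsCompact K := isCompact_Icc.prod isCompact_Icc
  have hUC : UniformContinuousOn R K := hKc.uniformContinuousOn_of_continuous hcont.continuousOn
  rw [Metric.tendsto_nhdsWithin_nhds]
  intro η' hη'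
  set η : ℝ := η' / (2 * (C + 1)) with hηdef
  have hηpos : 0 < η := by positivity
  obtain ⟨δ₁, hδ₁pos, hδ₁⟩ := Metric.uniformContinuousOn_iff.1 hUC (η / 2) (by positivity)
  refine ⟨min δ₁ (min 1 T), by positivity, ?_⟩
  intro ε hε hdist
  have hεpos : 0 < ε := hε
  rw [Real.dist_eq, sub_zero, abs_of_pos hεpos] at hdist
  have hε1 : ε ≤ 1 := le_of_lt (lt_of_lt_of_le hdist (le_trans (min_le_right _ _) (min_le_left _ _)))
  have hεT : ε ≤ T := le_of_lt (lt_of_lt_of_le hdist (le_trans (min_le_right _ _) (min_le_right _ _)))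
  have hεδ₁ : ε < δ₁ := lt_of_lt_of_le hdist (min_le_left _ _)
  -- pointwise bound
  have key : ∀ t ∈ Ioc (0:ℝ) T,
      (planarInc R t (t + ε) t (t + ε)) ^ 2 ≤ η * (F (t + ε) - F t) := by
    intro t ht
    obtain ⟨ht0, htT⟩ := ht
    have hle : t ≤ t + ε := by linarith
    set Δ := planarInc R t (t + ε) t (t + ε) with hΔ
    have hmemt : t ∈ Icc (0:ℝ) (T+1) := ⟨ht0.le, by linarith⟩
    have hmemb : t + ε ∈ Icc (0:ℝ) (T+1) := ⟨by linarith, by linarith⟩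
    have hd : dist (t + ε) t < δ₁ := by
      rw [Real.dist_eq, show t + ε - t = ε by ring, abs_of_pos hεpos]; exact hεδ₁
    have hd' : ∀ x : ℝ, dist ((t + ε, x) : ℝ × ℝ) (t, x) < δ₁ := by
      intro x
      rw [Prod.dist_eq]
      simp only [dist_self]
      rw [max_eq_left dist_nonneg]
      exact hd
    have h2 : |Δ| ≤ η := by
      have e : Δ = (R (t+ε, t+ε) - R (t, t+ε)) + (R (t, t) - R (t+ε, t)) := by
        rw [hΔ]; unfold planarInc; ring
      have b1 : dist (R (t+ε, t+ε)) (R (t, t+ε)) < η/2 :=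
        hδ₁ _ ⟨hmemb, hmemb⟩ _ ⟨hmemt, hmemb⟩ (hd' _)
      have b2 : dist (R (t, t)) (R (t+ε, t)) < η/2 := by
        rw [dist_comm]; exact hδ₁ _ ⟨hmemb, hmemt⟩ _ ⟨hmemt, hmemt⟩ (hd' _)
      rw [e]
      have habs := abs_add_le (R (t+ε, t+ε) - R (t, t+ε)) (R (t, t) - R (t+ε, t))
      rw [← Real.dist_eq, ← Real.dist_eq] at habs
      linarith
    have h1 : |Δ| ≤ F (t + ε) - F t := by
      have hm : MeasurableSet (Ioc t (t+ε) ×ˢ Ioc t (t+ε)) :=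
        measurableSet_Ioc.prod measurableSet_Ioc
      have htv := abs_apply_le_tv μ hm
      rw [hμ t (t+ε) t (t+ε) hle hle] at htv
      have hmono2 : (ν (Ioc t (t+ε) ×ˢ Ioc t (t+ε))).toReal ≤
          (ν (Ioc t (t+ε) ×ˢ (univ : Set ℝ))).toReal :=
        ENNReal.toReal_mono (measure_ne_top _ _)
          (measure_mono (prod_mono subset_rfl (subset_univ _)))
      have hdisj : Disjoint (Iic t ×ˢ (univ : Set ℝ)) (Ioc t (t+ε) ×ˢ (univ : Set ℝ)) := by
        refine Set.disjoint_left.2 fun p hp hq => ?_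
        rw [Set.mem_prod] at hp hq
        exact absurd hq.1.1 (not_lt.2 hp.1)
      have hsplit : ν (Iic (t+ε) ×ˢ (univ : Set ℝ)) =
          ν (Iic t ×ˢ (univ : Set ℝ)) + ν (Ioc t (t+ε) ×ˢ (univ : Set ℝ)) := by
        rw [← measure_union hdisj (measurableSet_Ioc.prod MeasurableSet.univ)]
        rw [← Set.union_prod, Set.Iic_union_Ioc_eq_Iic hle]
      have heq : F (t + ε) - F t = (ν (Ioc t (t+ε) ×ˢ (univ : Set ℝ))).toReal := by
        rw [hF]
        simp only
        rw [hsplit, ENNReal.toReal_add (measure_ne_top _ _) (measure_ne_top _ _)]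
        ring
      rw [heq]
      exact le_trans htv hmono2
    calc Δ ^ 2 = |Δ| * |Δ| := by rw [sq]; exact (abs_mul_abs_self Δ).symm
      _ ≤ η * (F (t + ε) - F t) := mul_le_mul h2 h1 (abs_nonneg Δ) hηpos.le
  -- continuity of the integrand
  have hgcont : Continuous fun t : ℝ => (planarInc R t (t + ε) t (t + ε)) ^ 2 := by
    unfold planarInc; fun_prop
  have hΔint : IntegrableOn (fun t : ℝ => (planarInc R t (t + ε) t (t + ε)) ^ 2) (Ioc 0 T) :=
    hgcont.integrableOn_Ioc
  have hGmeas : Measurable fun t : ℝ => F (t + ε) := hFmeas.comp (measurable_add_const ε)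
  have hGint : IntegrableOn (fun t : ℝ => F (t + ε)) (Ioc 0 T) :=
    hbdd _ hGmeas (fun t => hF0 _) (fun t => hFC _) 0 T
  have hFintOn : IntegrableOn F (Ioc 0 T) := hbdd F hFmeas hF0 hFC 0 T
  have hRHSint : IntegrableOn (fun t : ℝ => η * (F (t + ε) - F t)) (Ioc 0 T) :=
    (hGint.sub hFintOn).const_mul η
  set I := ∫ t in Ioc (0:ℝ) T, (planarInc R t (t + ε) t (t + ε)) ^ 2 with hI
  have hI0 : 0 ≤ I := setIntegral_nonneg measurableSet_Ioc fun t _ => sq_nonneg _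
  have hIle : I ≤ η * ((∫ t in Ioc (0:ℝ) T, F (t + ε)) - ∫ t in Ioc (0:ℝ) T, F t) := by
    calc I ≤ ∫ t in Ioc (0:ℝ) T, η * (F (t + ε) - F t) :=
          setIntegral_mono_on hΔint hRHSint measurableSet_Ioc key
      _ = η * ((∫ t in Ioc (0:ℝ) T, F (t + ε)) - ∫ t in Ioc (0:ℝ) T, F t) := by
          rw [integral_const_mul, integral_sub hGint hFintOn]
  have hAB : (∫ t in Ioc (0:ℝ) T, F (t + ε)) - (∫ t in Ioc (0:ℝ) T, F t) ≤ ε * C := by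
    have e1 : (∫ t in Ioc (0:ℝ) T, F (t + ε)) = ∫ t in ε..(T + ε), F t := by
      rw [← intervalIntegral.integral_of_le hT.le]
      rw [intervalIntegral.integral_comp_add_right F ε, zero_add]
    have e2 : (∫ t in Ioc (0:ℝ) T, F t) = ∫ t in (0:ℝ)..T, F t :=
      (intervalIntegral.integral_of_le hT.le).symm
    have split1 : (∫ t in ε..(T + ε), F t) = (∫ t in ε..T, F t) + ∫ t in T..(T + ε), F t :=
      (intervalIntegral.integral_add_adjacent_intervals (hFii ε T) (hFii T (T + ε))).symm
    have split2 : (∫ t in (0:ℝ)..T, F t) = (∫ t in (0:ℝ)..ε, F t) + ∫ t in ε..T, F t :=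
      (intervalIntegral.integral_add_adjacent_intervals (hFii 0 ε) (hFii ε T)).symm
    have bound1 : (∫ t in T..(T + ε), F t) ≤ ε * C := by
      have : (∫ t in T..(T + ε), F t) ≤ ∫ t in T..(T + ε), C :=
        intervalIntegral.integral_mono_on (by linarith) (hFii _ _) intervalIntegrable_const
          (fun x _ => hFC x)
      rwa [intervalIntegral.integral_const, smul_eq_mul, show T + ε - T = ε by ring] at this
    have bound2 : 0 ≤ ∫ t in (0:ℝ)..ε, F t :=
      intervalIntegral.integral_nonneg hεpos.le fun x _ => hF0 x
    rw [e1, e2]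
    linarith
  have hfinal : (1 / ε) * I ≤ η * C := by
    have h1 : I ≤ η * (ε * C) :=
      le_trans hIle (by nlinarith)
    rw [div_mul_eq_mul_div, one_mul, div_le_iff₀ hεpos]
    nlinarith
  rw [Real.dist_eq, sub_zero, abs_of_nonneg (by positivity : (0:ℝ) ≤ 1 / ε * I)]
  have : η * C < η' := by
    rw [hηdef]
    rw [div_mul_eq_mul_div, div_lt_iff₀ (by positivity)]
    nlinarith
  linarith
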